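/- Let V be a real topological vector space and C ⊆ V a convex cone, i.e. C is convex and s • y ∈ C for all real s > 0 and y ∈ C. Let F : V → ℝ satisfy: 0 ≤ F y for all y ∈ C; F (s • y) = s * F y for all s > 0 and y ∈ C; and t * F y + (1 - t) * F w ≤ F (t • y + (1 - t) • w) for all y, w ∈ C and t ∈ [0, 1]. If 0 < F y₁ for some y₁ ∈ C, then 0 < F y for every y ∈ C with y ∈ interior (C ∪ {0}). -/

import Mathlib

/-- A nonnegative, positively homogeneous, concave function on a convex cone of a real
topological vector space which is positive somewhere on the cone is positive at every
point of the cone lying in the interior of `C ∪ {0}`. -/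
theorem finsler_positive_on_interior
    {V : Type*} [AddCommGroup V] [Module ℝ V] [TopologicalSpace V]
    [IsTopologicalAddGroup V] [ContinuousSMul ℝ V]
    (C : Set V) (hconv : Convex ℝ C)
    (hcone : ∀ (s : ℝ) (y : V), 0 < s → y ∈ C → s • y ∈ C)
    (F : V → ℝ)
    (hnn : ∀ y ∈ C, 0 ≤ F y)
    (hhom : ∀ (s : ℝ) (y : V), 0 < s → y ∈ C → F (s • y) = s * F y)
    (hconc : ∀ y ∈ C, ∀ w ∈ C, ∀ t : ℝ, t ∈ Set.Icc (0:ℝ) 1 →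
      t * F y + (1 - t) * F w ≤ F (t • y + (1 - t) • w))
    (y₁ : V) (hy₁ : y₁ ∈ C) (hFy₁ : 0 < F y₁) :
    ∀ y ∈ C, y ∈ interior (C ∪ {0}) → 0 < F y := by
  intro y hyC hyInt
  -- the map t ↦ y + t • (y - y₁) is continuous and sends 0 to y
  have hcont : Continuous fun t : ℝ => y + t • (y - y₁) := by
    continuity
  have hmem : ∀ᶠ t in nhds (0 : ℝ), y + t • (y - y₁) ∈ interior (C ∪ {0}) := by
    have h0 : y + (0 : ℝ) • (y - y₁) = y := by simp
    have := hcont.continuousAt (x := (0 : ℝ))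
      (isOpen_interior.mem_nhds (by rw [h0]; exact hyInt))
    exact this
  have hmem' : ∀ᶠ t in nhdsWithin (0 : ℝ) (Set.Ioi 0),
      y + t • (y - y₁) ∈ C ∪ {0} ∧ 0 < t := by
    filter_upwards [hmem.filter_mono nhdsWithin_le_nhds,
      self_mem_nhdsWithin] with t ht ht'
    exact ⟨interior_subset ht, ht'⟩
  obtain ⟨t, hz, ht⟩ := hmem'.exists
  set z := y + t • (y - y₁) with hzdef
  have h1t : (0:ℝ) < 1 + t := by linarith
  have ht' : (0:ℝ) < t / (1 + t) := div_pos ht h1t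
  rcases hz with hzC | hz0
  · -- z ∈ C : y is a convex combination of y₁ and z
    have hkey : (t / (1 + t)) • y₁ + (1 - t / (1 + t)) • z = y := by
      rw [hzdef]
      match_scalars <;> field_simp <;> ring
    have := hconc y₁ hy₁ z hzC (t / (1 + t))
      ⟨le_of_lt ht', by rw [div_le_one h1t]; linarith⟩
    rw [hkey] at this
    have hFz : 0 ≤ F z := hnn z hzC
    have h2 : 0 ≤ (1 - t / (1 + t)) * F z :=
      mul_nonneg (by rw [sub_nonneg, div_le_one h1t]; linarith) hFz
    nlinarith [mul_pos ht' hFy₁]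
  · -- z = 0 : y = (t/(1+t)) • y₁
    have hz0 : z = 0 := hz0
    have h1 : (1 + t) • y = t • y₁ := by
      have hz : (1 + t) • y - t • y₁ = z := by rw [hzdef]; module
      rw [hz0, sub_eq_zero] at hz
      exact hz
    have hy_eq : y = (t / (1 + t)) • y₁ := by
      have h2 := congrArg (fun v => (1 + t)⁻¹ • v) h1
      simp only [smul_smul] at h2
      rw [inv_mul_cancel₀ h1t.ne', one_smul] at h2
      rw [h2, div_eq_inv_mul]
    rw [hy_eq, hhom _ _ ht' hy₁]
    positivity
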